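/- Let n ≥ 1 and consider the (2n+1)×(2n+1) grid graph with 0-indexed cells. Let (i,j) and (i,j') be two distinct cells in the same row such that i + j and i + j' are both even (so the cells are separated by at least one cell in between). Then there exists a Hamiltonian path from (i,j) to (i,j'). Likewise, for two distinct cells (i,j) and (i',j) in the same column with i + j and i' + j both even, there exists a Hamiltonian path from (i,j) to (i',j). -/

import Mathlib

/-- The `m × m` grid graph on cells `Fin m × Fin m`: two cells are adjacent iff
`|i - i| + |j - j| = 1`, i.e. they agree in one coordinate and the other
coordinates differ by exactly 1. -/
def gridGraph (m : ℕ) : SimpleGraph (Fin m × Fin m) where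
  Adj c c' := ((c.1 : ℤ) - (c'.1 : ℤ)).natAbs + ((c.2 : ℤ) - (c'.2 : ℤ)).natAbs = 1
  symm := ⟨by intro c c' h; omega⟩
  loopless := ⟨by intro c; simp⟩

instance (m : ℕ) : DecidableRel (gridGraph m).Adj :=
  fun _ _ => inferInstanceAs (Decidable (_ = 1))

def adjN (p q : ℕ × ℕ) : Prop :=
  (p.1 - q.1) + (q.1 - p.1) + (p.2 - q.2) + (q.2 - p.2) = 1

lemma adjN_symm {p q} (h : adjN p q) : adjN q p := by unfold adjN at *; omega

structure NatHam (h w : ℕ) (s t : ℕ × ℕ) (l : List (ℕ × ℕ)) : Prop where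
  chain : l.Chain' adjN
  nodup : l.Nodup
  bound : ∀ p ∈ l, p.1 < h ∧ p.2 < w
  cover : ∀ p : ℕ × ℕ, p.1 < h → p.2 < w → p ∈ l
  head : l.head? = some s
  last : l.getLast? = some t

lemma NatHam.map (f : ℕ × ℕ → ℕ × ℕ) {h w h' w' : ℕ} {s t l} (nh : NatHam h w s t l)
    (hb : ∀ p : ℕ×ℕ, p.1 < h → p.2 < w → (f p).1 < h' ∧ (f p).2 < w')
    (hadj : ∀ p q : ℕ×ℕ, p.1<h → p.2<w → q.1<h → q.2<w → adjN p q → adjN (f p) (f q))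
    (hinj : ∀ p q : ℕ×ℕ, p.1<h→p.2<w→q.1<h→q.2<w→ f p = f q → p = q)
    (hsurj : ∀ q : ℕ×ℕ, q.1<h'→q.2<w'→ ∃ p : ℕ×ℕ, (p.1<h ∧ p.2<w) ∧ f p = q) :
    NatHam h' w' (f s) (f t) (l.map f) where
  chain := by
    rw [List.Chain', List.isChain_iff_getElem]
    intro i hi
    simp only [List.length_map] at hi
    have hi1 : i < l.length := by omega
    have hi2 : i + 1 < l.length := by omega
    have b1 := nh.bound _ (List.getElem_mem hi1)
    have b2 := nh.bound _ (List.getElem_mem hi2)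
    simp only [List.get_eq_getElem, List.getElem_map]
    refine hadj _ _ b1.1 b1.2 b2.1 b2.2 ?_
    have := List.isChain_iff_getElem.1 nh.chain i (by omega)
    simpa using this
  nodup := List.Nodup.map_on (fun x hx y hy hf => hinj x y (nh.bound x hx).1 (nh.bound x hx).2 (nh.bound y hy).1 (nh.bound y hy).2 hf) nh.nodup
  bound := by
    intro p hp
    rcases List.mem_map.1 hp with ⟨q, hq, rfl⟩
    exact hb q (nh.bound q hq).1 (nh.bound q hq).2
  cover := by
    intro p h1 h2
    rcases hsurj p h1 h2 with ⟨q, ⟨hq1, hq2⟩, rfl⟩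
    exact List.mem_map_of_mem (nh.cover q hq1 hq2)
  head := by rw [List.head?_map, nh.head]; rfl
  last := by rw [List.getLast?_map, nh.last]; rfl

lemma NatHam.rev {h w s t l} (nh : NatHam h w s t l) : NatHam h w t s l.reverse where
  chain := by
    rw [List.Chain', List.isChain_reverse]
    exact List.IsChain.imp (fun a b h => adjN_symm h) nh.chain
  nodup := List.nodup_reverse.2 nh.nodup
  bound := fun p hp => nh.bound p (List.mem_reverse.1 hp)
  cover := fun p h1 h2 => List.mem_reverse.2 (nh.cover p h1 h2)
  head := by rw [List.head?_reverse, nh.last]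
  last := by rw [List.getLast?_reverse, nh.head]

lemma natHam_ofFn (h w N : ℕ) (f : ℕ → ℕ × ℕ) (hN : 0 < N)
    (hchain : ∀ k, k + 1 < N → adjN (f k) (f (k+1)))
    (hinj : ∀ a b, a < N → b < N → f a = f b → a = b)
    (hb : ∀ k, k < N → (f k).1 < h ∧ (f k).2 < w)
    (hcov : ∀ p : ℕ × ℕ, p.1 < h → p.2 < w → ∃ k, k < N ∧ f k = p) :
    NatHam h w (f 0) (f (N-1)) ((List.range N).map f) where
  chain := by
    rw [List.Chain', List.isChain_iff_getElem]
    intro i hi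
    simp only [List.length_map, List.length_range] at hi
    simp only [List.get_eq_getElem, List.getElem_map, List.getElem_range]
    exact hchain i (by omega)
  nodup := List.Nodup.map_on
    (fun x hx y hy hf => hinj x y (List.mem_range.1 hx) (List.mem_range.1 hy) hf)
    (List.nodup_range)
  bound := by
    intro p hp
    rcases List.mem_map.1 hp with ⟨k, hk, rfl⟩
    exact hb k (List.mem_range.1 hk)
  cover := by
    intro p h1 h2
    rcases hcov p h1 h2 with ⟨k, hk, rfl⟩
    exact List.mem_map_of_mem (List.mem_range.2 hk)
  head := by
    rw [List.head?_eq_getElem?, List.getElem?_map]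
    rw [List.getElem?_range (by omega)]
    rfl
  last := by
    rw [List.getLast?_eq_getElem?, List.getElem?_map]
    simp only [List.length_map, List.length_range]
    rw [List.getElem?_range (by omega)]
    rfl

@[simp] lemma adjN_mk {a b c d : ℕ} :
    adjN (a,b) (c,d) ↔ (a-c)+(c-a)+(b-d)+(d-b) = 1 := Iff.rfl

def f0 (w k : ℕ) : ℕ × ℕ :=
  if k < 3 then (k, 0)
  else if k < w+2 then (2, k-2)
  else if k < 2*w+1 then (1, 2*w+1-k)
  else (0, k-2*w)

/-- F0 family: in the `3 × w` grid, Hamiltonian list from `(0,0)` to `(0,w-1)`. -/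
lemma natHam_F0 (w : ℕ) (hw : 3 ≤ w) : ∃ l, NatHam 3 w (0,0) (0,w-1) l := by
  have key := natHam_ofFn 3 w (3*w) (f0 w) (by omega)
    (by
      intro k hk
      unfold f0
      split_ifs <;> simp only [adjN_mk, Prod.mk.injEq] <;> omega)
    (by
      intro a b ha hb hfe
      unfold f0 at hfe
      split_ifs at hfe <;> simp only [Prod.mk.injEq] at hfe <;> omega)
    (by
      intro k hk
      unfold f0
      split_ifs <;> simp <;> omega)
    (by
      rintro ⟨a, b⟩ h1 h2
      simp only at h1 h2
      have ev : ∀ k, k < 3*w → f0 w k = (a, b) → ∃ k', k' < 3*w ∧ f0 w k' = (a,b) :=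
        fun k h1 h2 => ⟨k, h1, h2⟩
      interval_cases a
      · rcases Nat.eq_zero_or_pos b with hb | hb
        · exact ev 0 (by omega) (by unfold f0; split_ifs <;> simp_all <;> omega)
        · exact ev (2*w+b) (by omega) (by unfold f0; split_ifs <;> simp_all <;> omega)
      · rcases Nat.eq_zero_or_pos b with hb | hb
        · exact ev 1 (by omega) (by unfold f0; split_ifs <;> simp_all <;> omega)
        · exact ev (2*w+1-b) (by omega) (by unfold f0; split_ifs <;> simp_all <;> omega)
      · rcases Nat.eq_zero_or_pos b with hb | hb
        · exact ev 2 (by omega) (by unfold f0; split_ifs <;> simp_all <;> omega)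
        · exact ev (b+2) (by omega) (by unfold f0; split_ifs <;> simp_all <;> omega))
  have h0 : f0 w 0 = (0, 0) := by unfold f0; split_ifs <;> simp_all <;> omega
  have hL : f0 w (3*w - 1) = (0, w-1) := by
    unfold f0; split_ifs <;> simp_all [Prod.ext_iff] <;> omega
  rw [h0, hL] at key
  exact ⟨_, key⟩

set_option linter.unreachableTactic false
set_option linter.unnecessarySeqFocus false
set_option linter.unusedTactic false

def e1 (w k : ℕ) : ℕ × ℕ :=
  if k < 2 then (1-k, 1)
  else if k < 5 then (k-2, 0)
  else if k < w+4 then (2, k-4)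
  else if k < w+6 then (w+5-k, w-1)
  else if k < 2*w+3 then (0, 2*w+4-k)
  else (1, k-(2*w+1))

set_option maxHeartbeats 1600000 in
/-- E1 family: in the `3 × w` grid (`w ≥ 5`), Hamiltonian list from `(1,1)` to `(1,w-2)`. -/
lemma natHam_E1 (w : ℕ) (hw : 5 ≤ w) : ∃ l, NatHam 3 w (1,1) (1,w-2) l := by
  have key := natHam_ofFn 3 w (3*w) (e1 w) (by omega)
    (by
      intro k hk
      unfold e1
      split_ifs <;> simp only [adjN_mk, Prod.mk.injEq] <;> omega)
    (by
      intro a b ha hb hfe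
      unfold e1 at hfe
      split_ifs at hfe <;> simp only [Prod.mk.injEq] at hfe <;> omega)
    (by
      intro k hk
      unfold e1
      split_ifs <;> simp <;> omega)
    (by
      rintro ⟨a, b⟩ h1 h2
      simp only at h1 h2
      have ev : ∀ k, k < 3*w → e1 w k = (a, b) → ∃ k', k' < 3*w ∧ e1 w k' = (a,b) :=
        fun k h1 h2 => ⟨k, h1, h2⟩
      interval_cases a
      · by_cases hb0 : b = 0
        · exact ev 2 (by omega) (by unfold e1; split_ifs <;> simp_all <;> omega)
        by_cases hb1 : b = 1
        · exact ev 1 (by omega) (by unfold e1; split_ifs <;> simp_all <;> omega)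
        by_cases hbw : b = w-1
        · exact ev (w+5) (by omega) (by unfold e1; split_ifs <;> simp_all <;> omega)
        · exact ev (2*w+4-b) (by omega) (by unfold e1; split_ifs <;> simp_all <;> omega)
      · by_cases hb0 : b = 0
        · exact ev 3 (by omega) (by unfold e1; split_ifs <;> simp_all <;> omega)
        by_cases hb1 : b = 1
        · exact ev 0 (by omega) (by unfold e1; split_ifs <;> simp_all <;> omega)
        by_cases hbw : b = w-1
        · exact ev (w+4) (by omega) (by unfold e1; split_ifs <;> simp_all <;> omega)
        · exact ev (b+2*w+1) (by omega) (by unfold e1; split_ifs <;> simp_all <;> omega)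
      · by_cases hb0 : b = 0
        · exact ev 4 (by omega) (by unfold e1; split_ifs <;> simp_all <;> omega)
        · exact ev (b+4) (by omega) (by unfold e1; split_ifs <;> simp_all <;> omega))
  have h0 : e1 w 0 = (1, 1) := by unfold e1; split_ifs <;> simp_all <;> omega
  have hL : e1 w (3*w - 1) = (1, w-2) := by
    unfold e1; split_ifs <;> simp_all [Prod.ext_iff] <;> omega
  rw [h0, hL] at key
  exact ⟨_, key⟩

def capf (h r k : ℕ) : ℕ × ℕ :=
  if k ≤ r then (r-k, 1)
  else if k ≤ r+h then (k-r-1, 0)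
  else (2*h+r-k, 1)

/-- Cap family: in the `h × 2` grid, Hamiltonian list from `(r,1)` to `(r+1,1)`. -/
lemma natHam_cap (h r : ℕ) (hr : r + 2 ≤ h) : ∃ l, NatHam h 2 (r,1) (r+1,1) l := by
  have key := natHam_ofFn h 2 (2*h) (capf h r) (by omega)
    (by
      intro k hk
      unfold capf
      split_ifs <;> simp only [adjN_mk, Prod.mk.injEq] <;> omega)
    (by
      intro a b ha hb hfe
      unfold capf at hfe
      split_ifs at hfe <;> simp only [Prod.mk.injEq] at hfe <;> omega)
    (by
      intro k hk
      unfold capf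
      split_ifs <;> simp <;> omega)
    (by
      rintro ⟨a, b⟩ h1 h2
      simp only at h1 h2
      have ev : ∀ k, k < 2*h → capf h r k = (a, b) → ∃ k', k' < 2*h ∧ capf h r k' = (a,b) :=
        fun k h1 h2 => ⟨k, h1, h2⟩
      interval_cases b
      · exact ev (a+r+1) (by omega) (by unfold capf; split_ifs <;> simp_all <;> omega)
      · by_cases har : a ≤ r
        · exact ev (r-a) (by omega) (by unfold capf; split_ifs <;> simp_all <;> omega)
        · exact ev (2*h+r-a) (by omega) (by unfold capf; split_ifs <;> simp_all <;> omega))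
  have h0 : capf h r 0 = (r, 1) := by unfold capf; split_ifs <;> simp_all <;> omega
  have hL : capf h r (2*h - 1) = (r+1, 1) := by
    unfold capf; split_ifs <;> simp_all [Prod.ext_iff] <;> omega
  rw [h0, hL] at key
  exact ⟨_, key⟩

lemma exists_vert_edge {h w : ℕ} {s t : ℕ × ℕ} {l : List (ℕ × ℕ)}
    (nh : NatHam h w s t l) (hh : 3 ≤ h) (hw : 1 ≤ w) (hst : s ≠ t) :
    ∃ (l1 : List (ℕ×ℕ)) (p q : ℕ×ℕ) (l2 : List (ℕ×ℕ)),
      l = l1 ++ p :: q :: l2 ∧ p.2 = 0 ∧ q.2 = 0 := by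
  by_contra hcon
  push_neg at hcon
  have claim : ∀ r : ℕ, r < h → ((r,0) : ℕ×ℕ) = s ∨ ((r,0) : ℕ×ℕ) = t := by
    intro r hr
    have hv : ((r,0) : ℕ×ℕ) ∈ l := nh.cover (r,0) hr (by omega)
    obtain ⟨l1, l2, hsp⟩ := List.append_of_mem hv
    rcases List.eq_nil_or_concat l1 with rfl | ⟨l1', u, rfl⟩
    · left
      have := nh.head
      rw [hsp] at this
      simp at this
      exact this
    · rw [List.concat_eq_append] at hsp
      rcases l2 with _ | ⟨z, l2'⟩
      · right
        have := nh.last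
        rw [hsp] at this
        simp at this
        exact this
      · exfalso
        have hch := nh.chain
        rw [hsp] at hch
        have hsp2 : l = (l1' ++ [u]) ++ (r,0) :: z :: l2' := hsp
        have hcj := List.isChain_append.1 hch
        have hadj_uv : adjN u (r,0) := by
          have := hcj.2.2
          simp at this
          exact this
        have hadj_vz : adjN ((r,0):ℕ×ℕ) z := (List.isChain_cons_cons.1 hcj.2.1).1
        -- u is not in column 0
        have hu2 : u.2 ≠ 0 := by
          intro hu0
          exact hcon l1' u (r,0) (z :: l2') (by simpa using hsp) hu0 rfl
        have hz2 : z.2 ≠ 0 := by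
          intro hz0
          exact hcon (l1' ++ [u]) ((r,0)) z l2' (by simpa using hsp) rfl hz0
        have hu : u = (r, 1) := by
          obtain ⟨u1, u2⟩ := u
          simp only [adjN_mk] at hadj_uv
          simp_all [Prod.ext_iff]
          omega
        have hz : z = (r, 1) := by
          obtain ⟨z1, z2⟩ := z
          simp only [adjN_mk] at hadj_vz
          simp_all [Prod.ext_iff]
          omega
        -- contradiction with nodup
        have hnd := nh.nodup
        rw [hsp] at hnd
        have hdisj := List.disjoint_of_nodup_append hnd
        refine hdisj (a := u) (by simp) ?_
        rw [hu, hz]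
        simp
  have c0 := claim 0 (by omega)
  have c1 := claim 1 (by omega)
  have c2 := claim 2 (by omega)
  rcases c0 with h0 | h0 <;> rcases c1 with h1 | h1 <;> rcases c2 with h2 | h2 <;>
    first
      | exact absurd (h0.trans h1.symm) (by decide)
      | exact absurd (h0.trans h2.symm) (by decide)
      | exact absurd (h1.trans h2.symm) (by decide)

lemma adjN_shift {p q : ℕ × ℕ} (h : adjN p q) : adjN (p.1, p.2+2) (q.1, q.2+2) := by
  obtain ⟨a,b⟩ := p; obtain ⟨c,d⟩ := q
  simp only [adjN_mk] at *
  omega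

lemma NatHam.splice {h w : ℕ} {s t : ℕ × ℕ} {l : List (ℕ × ℕ)}
    (nh : NatHam h w s t l) (hh : 3 ≤ h) (hw : 1 ≤ w) (hst : s ≠ t) :
    ∃ L, NatHam h (w+2) (s.1, s.2+2) (t.1, t.2+2) L := by
  obtain ⟨l1, ⟨p1,p2⟩, ⟨q1,q2⟩, l2, hsp, hp2, hq2⟩ := exists_vert_edge nh hh hw hst
  simp only at hp2 hq2
  subst hp2
  subst hq2
  have hsp' : l = (l1 ++ [(p1,0)]) ++ (q1,0) :: l2 := by simp [hsp]
  have hch := nh.chain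
  rw [hsp'] at hch
  have hcj := List.isChain_append.1 hch
  have hadj_pq : adjN (p1,0) (q1,0) := by
    have := hcj.2.2
    simp at this
    exact this
  have hvert : q1 = p1 + 1 ∨ p1 = q1 + 1 := by
    simp only [adjN_mk] at hadj_pq
    omega
  have hcap : ∃ lc, NatHam h 2 (p1, 1) (q1, 1) lc := by
    rcases hvert with hv | hv
    · obtain ⟨lc, nhc⟩ := natHam_cap h p1 (by
        have := nh.bound (q1,0) (by rw [hsp]; simp)
        omega)
      exact ⟨lc, by rw [hv]; exact nhc⟩
    · obtain ⟨lc, nhc⟩ := natHam_cap h q1 (by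
        have := nh.bound (p1,0) (by rw [hsp]; simp)
        omega)
      exact ⟨lc.reverse, by rw [hv]; exact nhc.rev⟩
  obtain ⟨lc, nhc⟩ := hcap
  set sh : ℕ × ℕ → ℕ × ℕ := fun v => (v.1, v.2 + 2) with hshdef
  have hsh_inj : Function.Injective sh := by
    intro a b hab
    simp only [hshdef, Prod.ext_iff] at hab
    obtain ⟨a1,a2⟩ := a; obtain ⟨b1,b2⟩ := b
    simp_all [Prod.ext_iff]
  refine ⟨(l1 ++ [(p1,0)]).map sh ++ lc ++ ((q1,0) :: l2).map sh, ?_⟩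
  -- basic membership facts
  have hmem_shift : ∀ (m : List (ℕ×ℕ)) (v : ℕ×ℕ), v ∈ m.map sh → 2 ≤ v.2 := by
    intro m v hv
    rcases List.mem_map.1 hv with ⟨u, _, rfl⟩
    simp [hshdef]
  have hmem_cap : ∀ v ∈ lc, v.2 < 2 := fun v hv => (nhc.bound v hv).2
  have hnd := nh.nodup
  rw [hsp'] at hnd
  have hbl : ∀ v ∈ l, v.1 < h ∧ v.2 < w := nh.bound
  constructor
  -- chain
  · rw [List.Chain', List.isChain_append]
    refine ⟨?_, ?_, ?_⟩
    · rw [List.isChain_append]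
      refine ⟨?_, nhc.chain, ?_⟩
      · exact List.isChain_map_of_isChain sh (fun a b hab => adjN_shift hab) (List.isChain_append.1 hch).1
      · intro x hx y hy
        rw [List.getLast?_map] at hx
        have hl1p : (l1 ++ [((p1:ℕ),(0:ℕ))]).getLast? = some (p1,0) := by simp
        rw [hl1p] at hx
        simp at hx
        rw [nhc.head] at hy
        simp at hy
        subst hx
        subst hy
        simp [hshdef, adjN_mk]
    · exact List.isChain_map_of_isChain sh (fun a b hab => adjN_shift hab) hcj.2.1
    · intro x hx y hy
      rw [List.getLast?_append] at hx
      rw [nhc.last] at hx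
      simp at hx
      have hy' : y = ((q1 : ℕ), (2 : ℕ)) := by
        rw [List.head?_map] at hy
        have heq : ((q1,0) :: l2 : List (ℕ×ℕ)).head? = some (q1,0) := rfl
        rw [heq] at hy
        simp [hshdef] at hy
        exact hy.symm
      subst hx
      subst hy'
      simp [adjN_mk]
  -- nodup
  · refine List.Nodup.append (List.Nodup.append ?_ nhc.nodup ?_) ?_ ?_
    · exact (List.nodup_append.1 hnd).1.map hsh_inj
    · rw [List.disjoint_left]
      intro a ha hc
      have := hmem_shift _ _ ha
      have := hmem_cap _ hc
      omega
    · exact (List.nodup_append.1 hnd).2.1.map hsh_inj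
    · rw [List.disjoint_left]
      intro a ha hc
      rcases List.mem_append.1 ha with ha | ha
      · rcases List.mem_map.1 ha with ⟨u, hu, rfl⟩
        rcases List.mem_map.1 hc with ⟨v, hv, hev⟩
        have := hsh_inj hev.symm
        subst this
        exact (List.nodup_append.1 hnd).2.2 _ hu _ hv rfl
      · have := hmem_shift _ _ hc
        have := hmem_cap _ ha
        omega
  -- bound
  · intro v hv
    rcases List.mem_append.1 hv with hv | hv
    · rcases List.mem_append.1 hv with hv | hv
      · rcases List.mem_map.1 hv with ⟨u, hu, rfl⟩
        have := hbl u (by rw [hsp']; exact List.mem_append_left _ hu)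
        simp only [hshdef]
        omega
      · have := nhc.bound v hv
        omega
    · rcases List.mem_map.1 hv with ⟨u, hu, rfl⟩
      have := hbl u (by rw [hsp']; exact List.mem_append_right _ hu)
      simp only [hshdef]
      omega
  -- cover
  · rintro ⟨a, b⟩ h1 h2
    by_cases hb : b < 2
    · have : ((a,b) : ℕ×ℕ) ∈ lc := nhc.cover (a,b) h1 hb
      exact List.mem_append.2 (Or.inl (List.mem_append.2 (Or.inr this)))
    · have hmem : ((a, b-2) : ℕ×ℕ) ∈ l := nh.cover (a, b-2) h1 (by omega)
      have hsh_eq : sh (a, b-2) = (a, b) := by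
        simp only [hshdef]
        simp
        omega
      rw [hsp'] at hmem
      rcases List.mem_append.1 hmem with hm | hm
      · refine List.mem_append.2 (Or.inl (List.mem_append.2 (Or.inl ?_)))
        rw [← hsh_eq]
        exact List.mem_map_of_mem hm
      · refine List.mem_append.2 (Or.inr ?_)
        rw [← hsh_eq]
        exact List.mem_map_of_mem hm
  -- head
  · have hhd := nh.head
    rw [hsp'] at hhd
    rw [List.head?_append, List.head?_append] at hhd ⊢
    rw [List.head?_map]
    rcases l1 with _ | ⟨x, l1'⟩
    · simp [hshdef] at hhd ⊢
      simp [← hhd, hshdef]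
    · simp [hshdef] at hhd ⊢
      simp [← hhd, hshdef]
  -- last
  · have hlt := nh.last
    rw [hsp'] at hlt
    rw [List.getLast?_append] at hlt ⊢
    rw [List.getLast?_map]
    have hsome : (((q1,0) : ℕ×ℕ) :: l2).getLast? = some ((((q1,0) : ℕ×ℕ) :: l2).getLast (by simp)) :=
      List.getLast?_eq_getLast _
    rw [hsome] at hlt ⊢
    simp only [Option.some_or] at hlt ⊢
    simp at hlt
    rw [hlt]
    rfl

lemma natHam_transpose {h w : ℕ} {s t : ℕ × ℕ} {l : List (ℕ × ℕ)} (nh : NatHam h w s t l) :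
    NatHam w h (s.2, s.1) (t.2, t.1) (l.map (fun v => (v.2, v.1))) := by
  have := nh.map (h' := w) (w' := h) (fun v => (v.2, v.1))
    (fun p h1 h2 => ⟨h2, h1⟩)
    (by
      rintro ⟨a,b⟩ ⟨c,d⟩ _ _ _ _ ha
      simp only [adjN_mk] at *
      omega)
    (by
      rintro ⟨a,b⟩ ⟨c,d⟩ _ _ _ _ he
      simp only [Prod.mk.injEq] at *
      omega)
    (by
      rintro ⟨a,b⟩ h1 h2
      exact ⟨(b,a), ⟨h2, h1⟩, rfl⟩)
  exact this

lemma natHam_reflV {h w : ℕ} {s t : ℕ × ℕ} {l : List (ℕ × ℕ)} (nh : NatHam h w s t l) :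
    NatHam h w (h-1-s.1, s.2) (h-1-t.1, t.2) (l.map (fun v => (h-1-v.1, v.2))) := by
  have := nh.map (h' := h) (w' := w) (fun v => (h-1-v.1, v.2))
    (fun p h1 h2 => ⟨by simp; omega, h2⟩)
    (by
      rintro ⟨a,b⟩ ⟨c,d⟩ h1 _ h3 _ ha
      simp only [adjN_mk] at *
      omega)
    (by
      rintro ⟨a,b⟩ ⟨c,d⟩ h1 _ h3 _ he
      simp only [Prod.mk.injEq] at *
      omega)
    (by
      rintro ⟨a,b⟩ h1 h2
      exact ⟨(h-1-a, b), ⟨by simp; omega, h2⟩, by simp; omega⟩)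
  exact this

lemma natHam_reflH {h w : ℕ} {s t : ℕ × ℕ} {l : List (ℕ × ℕ)} (nh : NatHam h w s t l) :
    NatHam h w (s.1, w-1-s.2) (t.1, w-1-t.2) (l.map (fun v => (v.1, w-1-v.2))) := by
  have := nh.map (h' := h) (w' := w) (fun v => (v.1, w-1-v.2))
    (fun p h1 h2 => ⟨h1, by simp; omega⟩)
    (by
      rintro ⟨a,b⟩ ⟨c,d⟩ _ h2 _ h4 ha
      simp only [adjN_mk] at *
      omega)
    (by
      rintro ⟨a,b⟩ ⟨c,d⟩ _ h2 _ h4 he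
      simp only [Prod.mk.injEq] at *
      omega)
    (by
      rintro ⟨a,b⟩ h1 h2
      exact ⟨(a, w-1-b), ⟨h1, by simp; omega⟩, by simp; omega⟩)
  exact this

lemma rect_row : ∀ k h w, h + w ≤ k → h % 2 = 1 → w % 2 = 1 → 3 ≤ h → 3 ≤ w →
    ∀ i j j' : ℕ, i < h → j < j' → j' < w → (i + j) % 2 = 0 → (i + j') % 2 = 0 →
    ∃ l, NatHam h w (i, j) (i, j') l := by
  intro k
  induction k with
  | zero => intro h w hk _ _ hh hw; omega
  | succ k IH =>
    intro h w hk hodd wodd hh hw i j j' hi hjj hj'w hpar hpar'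
    by_cases hA : 5 ≤ w ∧ 2 ≤ j
    · obtain ⟨l, nh⟩ := IH h (w-2) (by omega) hodd (by omega) hh (by omega) i (j-2) (j'-2)
        hi (by omega) (by omega) (by omega) (by omega)
      obtain ⟨L, nhL⟩ := nh.splice (by omega) (by omega)
        (by intro he; rw [Prod.mk.injEq] at he; omega)
      refine ⟨L, ?_⟩
      convert nhL using 2 <;> first | omega | (simp [Prod.ext_iff]; omega)
    by_cases hB : 5 ≤ w ∧ j' + 3 ≤ w
    · obtain ⟨l, nh⟩ := IH h (w-2) (by omega) hodd (by omega) hh (by omega) i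
        (w-1-j'-2) (w-1-j-2) hi (by omega) (by omega) (by omega) (by omega)
      obtain ⟨L, nhL⟩ := nh.splice (by omega) (by omega)
        (by intro he; rw [Prod.mk.injEq] at he; omega)
      have nhL' : NatHam h w (i, w-1-j') (i, w-1-j) L := by
        convert nhL using 2 <;> first | omega | (simp [Prod.ext_iff]; omega)
      have nhR := natHam_reflH nhL'
      have nhR' : NatHam h w (i, j') (i, j) (List.map (fun v => (v.1, w - 1 - v.2)) L) := by
        convert nhR using 2 <;> first | omega | (simp [Prod.ext_iff]; omega)
      exact ⟨_, nhR'.rev⟩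
    by_cases hC : 5 ≤ h ∧ 2 ≤ i
    · obtain ⟨l, nh⟩ := IH (h-2) w (by omega) (by omega) wodd (by omega) hw (i-2) j j'
        (by omega) hjj hj'w (by omega) (by omega)
      have nhT := natHam_transpose nh
      obtain ⟨L, nhL⟩ := nhT.splice (by omega) (by omega)
        (by intro he; rw [Prod.mk.injEq] at he; omega)
      have nhT2 := natHam_transpose nhL
      have nhT2' : NatHam h w (i, j) (i, j') (List.map (fun v => (v.2, v.1)) L) := by
        convert nhT2 using 2 <;> first | omega | (simp [Prod.ext_iff]; omega)
      exact ⟨_, nhT2'⟩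
    by_cases hD : 5 ≤ h ∧ i + 3 ≤ h
    · obtain ⟨l, nh⟩ := IH (h-2) w (by omega) (by omega) wodd (by omega) hw (h-1-i-2) j j'
        (by omega) hjj hj'w (by omega) (by omega)
      have nhT := natHam_transpose nh
      obtain ⟨L, nhL⟩ := nhT.splice (by omega) (by omega)
        (by intro he; rw [Prod.mk.injEq] at he; omega)
      have nhT2 := natHam_transpose nhL
      have nhT2' : NatHam h w (h-1-i, j) (h-1-i, j') (List.map (fun v => (v.2, v.1)) L) := by
        convert nhT2 using 2 <;> first | omega | (simp [Prod.ext_iff]; omega)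
      have nhR := natHam_reflV nhT2'
      have nhR' : NatHam h w (i, j) (i, j') (List.map (fun v => (h - 1 - v.1, v.2)) (List.map (fun v => (v.2, v.1)) L)) := by
        convert nhR using 2 <;> first | omega | (simp [Prod.ext_iff]; omega)
      exact ⟨_, nhR'⟩
    -- explicit base families
    have hh3 : h = 3 := by omega
    have hj1 : j ≤ 1 ∧ w - 2 ≤ j' := by
      by_cases hw5 : 5 ≤ w
      · omega
      · omega
    obtain ⟨hj, hj'2⟩ := hj1
    subst hh3
    interval_cases i
    · have hj0 : j = 0 := by omega
      have hjw : j' = w-1 := by omega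
      subst hj0; subst hjw
      exact natHam_F0 w hw
    · have hj0 : j = 1 := by omega
      have hjw : j' = w-2 := by omega
      subst hj0; subst hjw
      exact natHam_E1 w (by omega)
    · have hj0 : j = 0 := by omega
      have hjw : j' = w-1 := by omega
      subst hj0; subst hjw
      obtain ⟨l, nh⟩ := natHam_F0 w hw
      have nhR := natHam_reflV nh
      have nhR' : NatHam 3 w (2, 0) (2, w-1) (List.map (fun v => (3 - 1 - v.1, v.2)) l) := by
        convert nhR using 2 <;> first | rfl | omega | (simp [Prod.ext_iff]; omega)
      exact ⟨_, nhR'⟩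

lemma rect_any : ∀ h w : ℕ, h % 2 = 1 → w % 2 = 1 → 3 ≤ h → 3 ≤ w →
    ∀ s t : ℕ × ℕ, s.1 < h → s.2 < w → t.1 < h → t.2 < w → s ≠ t →
    (s.1 + s.2) % 2 = 0 → (t.1 + t.2) % 2 = 0 → (s.1 = t.1 ∨ s.2 = t.2) →
    ∃ l, NatHam h w s t l := by
  have row : ∀ h w : ℕ, h % 2 = 1 → w % 2 = 1 → 3 ≤ h → 3 ≤ w →
      ∀ s t : ℕ × ℕ, s.1 < h → s.2 < w → t.1 < h → t.2 < w → s ≠ t →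
      (s.1 + s.2) % 2 = 0 → (t.1 + t.2) % 2 = 0 → s.1 = t.1 →
      ∃ l, NatHam h w s t l := by
    rintro h w hodd wodd hh hw ⟨i, j⟩ ⟨i', j'⟩ h1 h2 h3 h4 hne hp hp' he
    simp only at h1 h2 h3 h4 hp hp' he
    subst he
    rcases Nat.lt_trichotomy j j' with hlt | heq | hgt
    · exact rect_row (h + w) h w le_rfl hodd wodd hh hw i j j' h1 hlt h4 hp hp'
    · exact absurd (by rw [heq]) hne
    · obtain ⟨l, nh⟩ := rect_row (h + w) h w le_rfl hodd wodd hh hw i j' j h1 hgt h2 hp' hp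
      exact ⟨_, nh.rev⟩
  intro h w hodd wodd hh hw s t h1 h2 h3 h4 hne hp hp' hsame
  rcases hsame with he | he
  · exact row h w hodd wodd hh hw s t h1 h2 h3 h4 hne hp hp' he
  · obtain ⟨l, nh⟩ := row w h wodd hodd hw hh (s.2, s.1) (t.2, t.1) h2 h1 h4 h3
      (by
        intro hcon
        rw [Prod.mk.injEq] at hcon
        exact hne (Prod.ext hcon.2 hcon.1))
      (by simpa [Nat.add_comm] using hp) (by simpa [Nat.add_comm] using hp') he
    have := natHam_transpose nh
    simp only at this
    exact ⟨_, this⟩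

lemma walk_of_list {V : Type*} {G : SimpleGraph V} :
    ∀ (l : List V) (s t : V), l.Chain' G.Adj → l.head? = some s → l.getLast? = some t →
    ∃ p : G.Walk s t, p.support = l
  | [], s, t => by intro _ hh _; simp at hh
  | [x], s, t => by
    intro _ hh hl
    simp at hh hl
    subst hh
    subst hl
    exact ⟨SimpleGraph.Walk.nil, by simp⟩
  | x :: y :: l, s, t => by
    intro hc hh hl
    have hx : x = s := by simpa using hh
    rcases List.isChain_cons_cons.1 hc with ⟨hadj, hc'⟩
    have hl' : (y :: l).getLast? = some t := by
      rw [← hl]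
      exact (List.getLast?_cons_cons ..).symm
    obtain ⟨q, hq⟩ := walk_of_list (y :: l) y t hc' rfl hl'
    subst hx
    exact ⟨SimpleGraph.Walk.cons hadj q, by simp [hq]⟩

lemma ham_bridge {m : ℕ} (hm : 0 < m) (s t : Fin m × Fin m) (l : List (ℕ × ℕ))
    (nh : NatHam m m (s.1.val, s.2.val) (t.1.val, t.2.val) l) :
    ∃ p : (gridGraph m).Walk s t, p.IsHamiltonian := by
  set c : ℕ × ℕ → Fin m × Fin m :=
    fun p => (⟨p.1 % m, Nat.mod_lt _ hm⟩, ⟨p.2 % m, Nat.mod_lt _ hm⟩) with hc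
  have hceq : ∀ p : ℕ × ℕ, p.1 < m → p.2 < m → ∀ v : Fin m × Fin m,
      (v.1.val = p.1 ∧ v.2.val = p.2) → c p = v := by
    rintro ⟨a, b⟩ ha hb ⟨v1, v2⟩ ⟨e1, e2⟩
    simp only [hc, Prod.mk.injEq]
    constructor
    · apply Fin.ext
      simp only at e1
      simp [Nat.mod_eq_of_lt ha, e1]
    · apply Fin.ext
      simp only at e2
      simp [Nat.mod_eq_of_lt hb, e2]
  have hchain : (l.map c).Chain' (gridGraph m).Adj := by
    rw [List.Chain', List.isChain_iff_getElem]
    intro i hi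
    simp only [List.length_map] at hi
    have hi1 : i < l.length := by omega
    have hi2 : i + 1 < l.length := by omega
    have b1 := nh.bound _ (List.getElem_mem hi1)
    have b2 := nh.bound _ (List.getElem_mem hi2)
    have hadj := List.isChain_iff_getElem.1 nh.chain i (by omega)
    simp only [List.getElem_map]
    set p := l[i]
    set q := l[i+1]
    show (gridGraph m).Adj (c p) (c q)
    obtain ⟨a, b⟩ := p
    obtain ⟨a', b'⟩ := q
    simp only [adjN_mk] at hadj
    simp only at b1 b2
    show (((⟨a % m, _⟩ : Fin m) : ℤ) - (⟨a' % m, _⟩ : Fin m)).natAbs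
      + (((⟨b % m, _⟩ : Fin m) : ℤ) - (⟨b' % m, _⟩ : Fin m)).natAbs = 1
    simp only [Fin.val_mk]
    rw [Nat.mod_eq_of_lt b1.1, Nat.mod_eq_of_lt b1.2, Nat.mod_eq_of_lt b2.1,
      Nat.mod_eq_of_lt b2.2]
    omega
  have hhead : (l.map c).head? = some s := by
    rw [List.head?_map, nh.head]
    simp only [Option.map_some]
    congr 1
    exact hceq _ s.1.isLt s.2.isLt s ⟨rfl, rfl⟩
  have hlast : (l.map c).getLast? = some t := by
    rw [List.getLast?_map, nh.last]
    simp only [Option.map_some]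
    congr 1
    exact hceq _ t.1.isLt t.2.isLt t ⟨rfl, rfl⟩
  obtain ⟨p, hp⟩ := walk_of_list (l.map c) s t hchain hhead hlast
  refine ⟨p, ?_⟩
  intro v
  rw [hp]
  apply @List.count_eq_one_of_mem _ instBEqOfDecidableEq inferInstance
  · refine List.Nodup.map_on ?_ nh.nodup
    intro x hx y hy hxy
    have bx := nh.bound x hx
    have by' := nh.bound y hy
    obtain ⟨a, b⟩ := x
    obtain ⟨a', b'⟩ := y
    simp only [hc, Prod.mk.injEq, Fin.mk.injEq] at hxy
    simp only at bx by'
    rw [Nat.mod_eq_of_lt bx.1, Nat.mod_eq_of_lt bx.2, Nat.mod_eq_of_lt by'.1,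
      Nat.mod_eq_of_lt by'.2] at hxy
    simp [Prod.mk.injEq, hxy.1, hxy.2]
  · have hmem : ((v.1.val, v.2.val) : ℕ × ℕ) ∈ l := nh.cover _ v.1.isLt v.2.isLt
    have := List.mem_map_of_mem (f := c) hmem
    rwa [hceq _ v.1.isLt v.2.isLt v ⟨rfl, rfl⟩] at this


/-- in the `(2n+1) × (2n+1)` grid graph (`n ≥ 1`), any two distinct cells
in the same row whose coordinate sums are both even are joined by a Hamiltonian path;
likewise for two distinct cells in the same column with both coordinate sums even. -/
theorem exists_hamiltonian_path_same_row_or_column (n : ℕ) (hn : 1 ≤ n) :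
    (∀ i j j' : Fin (2 * n + 1), j ≠ j' →
      (i.val + j.val) % 2 = 0 → (i.val + j'.val) % 2 = 0 →
      ∃ p : (gridGraph (2 * n + 1)).Walk (i, j) (i, j'), p.IsHamiltonian) ∧
    (∀ i i' j : Fin (2 * n + 1), i ≠ i' →
      (i.val + j.val) % 2 = 0 → (i'.val + j.val) % 2 = 0 →
      ∃ p : (gridGraph (2 * n + 1)).Walk (i, j) (i', j), p.IsHamiltonian) := by
  have hm : 0 < 2 * n + 1 := by omega
  constructor
  · intro i j j' hne hp hp'
    obtain ⟨l, nh⟩ := rect_any (2*n+1) (2*n+1) (by omega) (by omega) (by omega) (by omega)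
      (i.val, j.val) (i.val, j'.val) i.isLt j.isLt i.isLt j'.isLt
      (by
        intro hcon
        rw [Prod.mk.injEq] at hcon
        exact hne (Fin.ext hcon.2))
      hp hp' (Or.inl rfl)
    exact ham_bridge hm (i, j) (i, j') l nh
  · intro i i' j hne hp hp'
    obtain ⟨l, nh⟩ := rect_any (2*n+1) (2*n+1) (by omega) (by omega) (by omega) (by omega)
      (i.val, j.val) (i'.val, j.val) i.isLt j.isLt i'.isLt j.isLt
      (by
        intro hcon
        rw [Prod.mk.injEq] at hcon
        exact hne (Fin.ext hcon.1))
      hp hp' (Or.inr rfl)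
    exact ham_bridge hm (i, j) (i', j) l nh
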